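/- In the colored partition monoid CPar_k, two colored partition diagrams d and d' are in the same Green's J-class (i.e., CPar_k · d · CPar_k = CPar_k · d' · CPar_k) if and only if d and d' have the same rank, where the rank of a colored partition diagram is its number of propagating parts (parts intersecting both the top row {1,...,k} and the bottom row {1',...,k'}). -/

import Mathlib

open Relation

/-- The cyclic group of order `r` (multiplicative). -/
abbrev Cr (r : ℕ) := Multiplicative (ZMod r)

/-- A colored `(k,l)`-partition diagram: a set-partition (equivalence relation)
of the `k` top vertices (`Sum.inl`) and `l` bottom vertices (`Sum.inr`),
together with a color from `C_r` attached to each block. -/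
structure CDiag (r k l : ℕ) where
  rel : Setoid (Fin k ⊕ Fin l)
  col : Quotient rel → Cr r

namespace CDiag

/-- Push a setoid forward along a map (equivalence relation generated by the
image relation). -/
def push {α β : Type*} (f : α → β) (s : Setoid α) : Setoid β :=
  Relation.EqvGen.setoid fun x y => ∃ a b, s.r a b ∧ x = f a ∧ y = f b

/-- Top row of the first factor stays on top; its bottom row goes to the middle. -/
def ι₁ {k l m : ℕ} : Fin k ⊕ Fin l → Fin k ⊕ (Fin l ⊕ Fin m) :=
  Sum.map id Sum.inl

/-- Top row of the second factor goes to the middle; its bottom row stays at the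
bottom. -/
def ι₂ {k l m : ℕ} : Fin l ⊕ Fin m → Fin k ⊕ (Fin l ⊕ Fin m) :=
  Sum.inr

/-- The outer (top and bottom) vertices inside the three-row concatenation. -/
def ιo {k l m : ℕ} : Fin k ⊕ Fin m → Fin k ⊕ (Fin l ⊕ Fin m) :=
  Sum.map id Sum.inr

/-- The equivalence relation on the three rows generated by stacking `d₁` on
top of `d₂`. -/
def bigRel {r k l m : ℕ} (d₁ : CDiag r k l) (d₂ : CDiag r l m) :
    Setoid (Fin k ⊕ (Fin l ⊕ Fin m)) :=
  push (ι₁ (m := m)) d₁.rel ⊔ push (ι₂ (k := k)) d₂.rel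

/-- Linear position of a vertex (top row first, then bottom row). -/
def pos {k l : ℕ} : Fin k ⊕ Fin l → ℕ :=
  Sum.elim (fun i => (i : ℕ)) fun j => k + (j : ℕ)

/-- `a` is the canonical (least-position) representative of its block in `d`. -/
def lead {r k l : ℕ} (d : CDiag r k l) (a : Fin k ⊕ Fin l) : Prop :=
  ∀ b, d.rel.r a b → pos a ≤ pos b

/-- Concatenation of colored partition diagrams (all parameters `x_i = 1`):
stack `d₁` on top of `d₂`, identify the bottom row of `d₁` with the top row of
`d₂`, restrict to the outer rows, color each resulting block by the product of
the colors of all blocks of `d₁` and `d₂` contributing to it, and discard the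
components lying entirely in the middle. -/
noncomputable def comp {r k l m : ℕ} (d₁ : CDiag r k l) (d₂ : CDiag r l m) :
    CDiag r k m where
  rel := Setoid.comap ιo (bigRel d₁ d₂)
  col := fun q =>
    (∏ᶠ (a : Fin k ⊕ Fin l)
      (_ : lead d₁ a ∧ (bigRel d₁ d₂).r (ι₁ a) (ιo q.out)),
        d₁.col (Quotient.mk d₁.rel a)) *
    (∏ᶠ (a : Fin l ⊕ Fin m)
      (_ : lead d₂ a ∧ (bigRel d₁ d₂).r (ι₂ a) (ιo q.out)),
        d₂.col (Quotient.mk d₂.rel a))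

/-- The identity diagram: each part `{i, i'}`, all colored by the identity. -/
def idDiag (r k : ℕ) : CDiag r k k :=
  ⟨Relation.EqvGen.setoid fun x y => ∃ i, x = Sum.inl i ∧ y = Sum.inr i,
    fun _ => 1⟩

/-- A block is propagating if it meets both the top and the bottom row. -/
def Propagating {r k l : ℕ} (d : CDiag r k l) (q : Quotient d.rel) : Prop :=
  (∃ i : Fin k, Quotient.mk d.rel (Sum.inl i) = q) ∧
  (∃ j : Fin l, Quotient.mk d.rel (Sum.inr j) = q)

/-- The rank of a colored partition diagram: its number of propagating parts. -/
noncomputable def rn {r k l : ℕ} (d : CDiag r k l) : ℕ :=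
  Nat.card {q : Quotient d.rel // Propagating d q}

end CDiag

open CDiag

namespace CPar

variable {r k l m : ℕ}

/-- Raw edge relation of the first factor inside the three-row picture. -/
def R1 (d₁ : CDiag r k l) (x y : Fin k ⊕ (Fin l ⊕ Fin m)) : Prop :=
  ∃ a b, d₁.rel.r a b ∧ x = ι₁ a ∧ y = ι₁ b

def R2 (d₂ : CDiag r l m) (x y : Fin k ⊕ (Fin l ⊕ Fin m)) : Prop :=
  ∃ a b, d₂.rel.r a b ∧ x = ι₂ (k := k) a ∧ y = ι₂ b

lemma eqvGen_collapse {α : Type*} (p q : α → α → Prop) (x y : α) :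
    EqvGen (fun a b => EqvGen p a b ∨ EqvGen q a b) x y ↔
      EqvGen (fun a b => p a b ∨ q a b) x y := by
  constructor
  · intro h
    induction h with
    | rel a b h =>
      rcases h with h | h
      · exact EqvGen.mono (fun a b hh => Or.inl hh) a b h
      · exact EqvGen.mono (fun a b hh => Or.inr hh) a b h
    | refl a => exact EqvGen.refl a
    | symm a b _ ih => exact ih.symm a b
    | trans a b c _ _ ih1 ih2 => exact ih1.trans a b c ih2
  · intro h
    refine EqvGen.mono ?_ x y h
    intro a b hh
    exact hh.imp (EqvGen.rel a b) (EqvGen.rel a b)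

lemma bigRel_r_iff (d₁ : CDiag r k l) (d₂ : CDiag r l m)
    (x y : Fin k ⊕ (Fin l ⊕ Fin m)) :
    (bigRel d₁ d₂).r x y ↔ EqvGen (fun a b => R1 d₁ a b ∨ R2 d₂ a b) x y := by
  have : bigRel d₁ d₂ =
      EqvGen.setoid (fun a b =>
        (push (ι₁ (m := m)) d₁.rel) a b ∨ (push (ι₂ (k := k)) d₂.rel) a b) :=
    Setoid.sup_eq_eqvGen _ _
  rw [show (bigRel d₁ d₂).r x y ↔ (bigRel d₁ d₂) x y from Iff.rfl, this]
  exact eqvGen_collapse _ _ x y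

section Ker

variable {r k l m : ℕ} {U : Type} (d₁ : CDiag r k l) (d₂ : CDiag r l m)
  (F : Fin k ⊕ (Fin l ⊕ Fin m) → U)

lemma bigRel_iff_ker
    (h₁ : ∀ u v, d₁.rel.r u v → F (ι₁ u) = F (ι₁ v))
    (h₂ : ∀ u v, d₂.rel.r u v → F (ι₂ u) = F (ι₂ v))
    (h₃ : ∀ x y, F x = F y → (bigRel d₁ d₂).r x y)
    (x y : Fin k ⊕ (Fin l ⊕ Fin m)) :
    (bigRel d₁ d₂).r x y ↔ F x = F y := by
  constructor
  · intro h
    rw [bigRel_r_iff] at h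
    induction h with
    | rel a b h =>
      rcases h with ⟨u, v, huv, rfl, rfl⟩ | ⟨u, v, huv, rfl, rfl⟩
      · exact h₁ u v huv
      · exact h₂ u v huv
    | refl a => rfl
    | symm a b _ ih => exact ih.symm
    | trans a b c _ _ ih1 ih2 => exact ih1.trans ih2
  · exact h₃ x y

lemma comp_rel_iff
    (h₁ : ∀ u v, d₁.rel.r u v → F (ι₁ u) = F (ι₁ v))
    (h₂ : ∀ u v, d₂.rel.r u v → F (ι₂ u) = F (ι₂ v))
    (h₃ : ∀ x y, F x = F y → (bigRel d₁ d₂).r x y)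
    (u v : Fin k ⊕ Fin m) :
    (comp d₁ d₂).rel.r u v ↔ F (ιo u) = F (ιo v) := by
  have : (comp d₁ d₂).rel.r u v ↔ (bigRel d₁ d₂).r (ιo u) (ιo v) := Iff.rfl
  rw [this, bigRel_iff_ker d₁ d₂ F h₁ h₂ h₃]

end Ker

section Lead

variable {r k l : ℕ} (d : CDiag r k l)

lemma pos_injective : Function.Injective (pos (k := k) (l := l)) := by
  rintro (i | i) (j | j) h <;> simp [pos] at h <;> first
    | (ext; omega) | (exfalso; omega) | (congr 1; ext; omega)

lemma lead_unique {a b : Fin k ⊕ Fin l} (ha : lead d a) (hb : lead d b)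
    (hab : d.rel.r a b) : a = b :=
  pos_injective (le_antisymm (ha b hab) (hb a (d.rel.symm hab)))

lemma exists_lead_rep (B : Quotient d.rel) :
    ∃ a, Quotient.mk d.rel a = B ∧ lead d a := by
  classical
  induction B using Quotient.ind with
  | _ a₀ =>
    have hne : (Finset.univ.filter (fun b => d.rel.r a₀ b)).Nonempty :=
      ⟨a₀, by simpa using d.rel.refl a₀⟩
    obtain ⟨a, ha, hmin⟩ := Finset.exists_min_image _ pos hne
    simp only [Finset.mem_filter, Finset.mem_univ, true_and] at ha
    refine ⟨a, Quotient.sound (d.rel.symm ha), ?_⟩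
    intro b hb
    exact hmin b (by simpa using d.rel.trans ha hb)

noncomputable def leadRep (B : Quotient d.rel) : Fin k ⊕ Fin l :=
  (exists_lead_rep d B).choose

lemma leadRep_mk (B : Quotient d.rel) : Quotient.mk d.rel (leadRep d B) = B :=
  (exists_lead_rep d B).choose_spec.1

lemma leadRep_lead (B : Quotient d.rel) : lead d (leadRep d B) :=
  (exists_lead_rep d B).choose_spec.2

lemma leadRep_eq {a : Fin k ⊕ Fin l} (ha : lead d a) :
    leadRep d (Quotient.mk d.rel a) = a :=
  lead_unique d (leadRep_lead d _) ha (Quotient.exact (leadRep_mk d _))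

end Lead
section CompCol

variable {r k l m : ℕ} {U : Type} (d₁ : CDiag r k l) (d₂ : CDiag r l m)
  (F : Fin k ⊕ (Fin l ⊕ Fin m) → U)

lemma comp_col_eq
    (h₁ : ∀ u v, d₁.rel.r u v → F (ι₁ u) = F (ι₁ v))
    (h₂ : ∀ u v, d₂.rel.r u v → F (ι₂ u) = F (ι₂ v))
    (h₃ : ∀ x y, F x = F y → (bigRel d₁ d₂).r x y)
    (u : Fin k ⊕ Fin m) :
    (comp d₁ d₂).col (Quotient.mk (comp d₁ d₂).rel u) =
      (∏ᶠ (B : Quotient d₁.rel) (_ : F (ι₁ (leadRep d₁ B)) = F (ιo u)), d₁.col B) *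
      (∏ᶠ (C : Quotient d₂.rel) (_ : F (ι₂ (leadRep d₂ C)) = F (ιo u)), d₂.col C) := by
  classical
  have hbig := bigRel_iff_ker d₁ d₂ F h₁ h₂ h₃
  have hout : F (ιo (Quotient.mk (comp d₁ d₂).rel u).out) = F (ιo u) := by
    have h : (comp d₁ d₂).rel.r (Quotient.mk (comp d₁ d₂).rel u).out u :=
      Quotient.mk_out u
    exact (hbig _ _).1 h
  show (∏ᶠ (a : Fin k ⊕ Fin l)
      (_ : lead d₁ a ∧ (bigRel d₁ d₂).r (ι₁ a) (ιo (Quotient.mk (comp d₁ d₂).rel u).out)),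
        d₁.col (Quotient.mk d₁.rel a)) *
    (∏ᶠ (a : Fin l ⊕ Fin m)
      (_ : lead d₂ a ∧ (bigRel d₁ d₂).r (ι₂ a) (ιo (Quotient.mk (comp d₁ d₂).rel u).out)),
        d₂.col (Quotient.mk d₂.rel a)) = _
  congr 1
  · rw [finprod_cond_eq_prod_of_cond_iff
      (fun a => d₁.col (Quotient.mk d₁.rel a))
      (t := Finset.univ.filter (fun a => lead d₁ a ∧ F (ι₁ a) = F (ιo u)))
      (fun {a} _ => by
        simp only [Finset.mem_filter, Finset.mem_univ, true_and, hbig, hout]),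
      finprod_cond_eq_prod_of_cond_iff
      (fun B => d₁.col B)
      (t := Finset.univ.filter (fun B => F (ι₁ (leadRep d₁ B)) = F (ιo u)))
      (fun {B} _ => by simp only [Finset.mem_filter, Finset.mem_univ, true_and])]
    refine Finset.prod_bij' (fun a _ => Quotient.mk d₁.rel a)
      (fun B _ => leadRep d₁ B) ?_ ?_ ?_ ?_ ?_
    · intro a ha
      simp only [Finset.mem_filter, Finset.mem_univ, true_and] at ha ⊢
      rw [leadRep_eq d₁ ha.1]; exact ha.2
    · intro B hB
      simp only [Finset.mem_filter, Finset.mem_univ, true_and] at hB ⊢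
      exact ⟨leadRep_lead d₁ B, hB⟩
    · intro a ha
      simp only [Finset.mem_filter, Finset.mem_univ, true_and] at ha
      exact leadRep_eq d₁ ha.1
    · intro B _; exact leadRep_mk d₁ B
    · intro a _; rfl
  · rw [finprod_cond_eq_prod_of_cond_iff
      (fun a => d₂.col (Quotient.mk d₂.rel a))
      (t := Finset.univ.filter (fun a => lead d₂ a ∧ F (ι₂ a) = F (ιo u)))
      (fun {a} _ => by
        simp only [Finset.mem_filter, Finset.mem_univ, true_and, hbig, hout]),
      finprod_cond_eq_prod_of_cond_iff
      (fun C => d₂.col C)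
      (t := Finset.univ.filter (fun C => F (ι₂ (leadRep d₂ C)) = F (ιo u)))
      (fun {C} _ => by simp only [Finset.mem_filter, Finset.mem_univ, true_and])]
    refine Finset.prod_bij' (fun a _ => Quotient.mk d₂.rel a)
      (fun C _ => leadRep d₂ C) ?_ ?_ ?_ ?_ ?_
    · intro a ha
      simp only [Finset.mem_filter, Finset.mem_univ, true_and] at ha ⊢
      rw [leadRep_eq d₂ ha.1]; exact ha.2
    · intro C hC
      simp only [Finset.mem_filter, Finset.mem_univ, true_and] at hC ⊢
      exact ⟨leadRep_lead d₂ C, hC⟩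
    · intro a ha
      simp only [Finset.mem_filter, Finset.mem_univ, true_and] at ha
      exact leadRep_eq d₂ ha.1
    · intro C _; exact leadRep_mk d₂ C
    · intro a _; rfl

end CompCol
section FinprodEval

variable {M : Type*} [CommMonoid M] {α : Type*}

lemma finprod_cond_unique (f : α → M) (p : α → Prop) (a₀ : α)
    (h : ∀ a, p a ↔ a = a₀) : (∏ᶠ (a) (_ : p a), f a) = f a₀ := by
  classical
  have : ∀ a, (∏ᶠ (_ : p a), f a) = if a = a₀ then f a else 1 := by
    intro a
    rw [finprod_eq_if]
    simp [h a]
  rw [finprod_congr this]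
  refine finprod_eq_single _ a₀ (fun x hx => by simp [hx])
    |>.trans (by simp)

lemma finprod_cond_empty (f : α → M) (p : α → Prop) (h : ∀ a, ¬ p a) :
    (∏ᶠ (a) (_ : p a), f a) = 1 := by
  classical
  have : ∀ a, (∏ᶠ (_ : p a), f a) = 1 := by
    intro a
    rw [finprod_eq_if, if_neg (h a)]
  rw [finprod_congr this, finprod_one]

end FinprodEval

section Rank

variable {r k l m : ℕ}


lemma eqvGen_rtg {α : Type*} {S : α → α → Prop} (hs : Symmetric S) :
    ∀ {x y : α}, Relation.EqvGen S x y → Relation.ReflTransGen S x y := by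
  intro x y h
  induction h with
  | rel a b hab => exact Relation.ReflTransGen.single hab
  | refl a => exact Relation.ReflTransGen.refl
  | symm a b hab ih => exact (@Relation.ReflTransGen.symmetric _ S ⟨fun a b h => hs h⟩).symm _ _ ih
  | trans a b c hab hbc ih1 ih2 => exact ih1.trans ih2

lemma symm_R1R2 (d₁ : CDiag r k l) (d₂ : CDiag r l m) :
    Symmetric (fun a b => R1 (m := m) d₁ a b ∨ R2 (k := k) d₂ a b) := by
  rintro a b (⟨u, v, huv, rfl, rfl⟩ | ⟨u, v, huv, rfl, rfl⟩)
  · exact Or.inl ⟨v, u, d₁.rel.symm huv, rfl, rfl⟩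
  · exact Or.inr ⟨v, u, d₂.rel.symm huv, rfl, rfl⟩

/-- A top vertex connected (in the big three-row relation) to anything is either
`d₁`-connected to it directly, or `d₁`-connected to a middle vertex. -/
lemma top_reaches (d₁ : CDiag r k l) (d₂ : CDiag r l m) (i : Fin k)
    (y : Fin k ⊕ (Fin l ⊕ Fin m))
    (h : (bigRel d₁ d₂).r (Sum.inl i) y) :
    (∃ u, y = ι₁ u ∧ d₁.rel.r (Sum.inl i) u) ∨
      ∃ mm : Fin l, d₁.rel.r (Sum.inl i) (Sum.inr mm) := by
  rw [bigRel_r_iff] at h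
  have h' : Relation.ReflTransGen (fun a b => R1 (m := m) d₁ a b ∨ R2 (k := k) d₂ a b)
      (Sum.inl i) y := eqvGen_rtg (symm_R1R2 d₁ d₂) h
  clear h
  induction h' with
  | refl => exact Or.inl ⟨Sum.inl i, rfl, d₁.rel.refl _⟩
  | tail hyz hstep ih =>
    rcases ih with ⟨u, rfl, hu⟩ | ⟨mm, hmm⟩
    · rcases hstep with ⟨a, b, hab, ha, rfl⟩ | ⟨a, b, hab, ha, rfl⟩
      · have : u = a := by
          have : Function.Injective (ι₁ (k := k) (l := l) (m := m)) := by
            rintro (x | x) (y | y) hxy <;> simp [ι₁] at hxy <;> simp [hxy]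
          exact this ha
        subst this
        exact Or.inl ⟨b, rfl, d₁.rel.trans hu hab⟩
      · -- u is in the image of ι₁ and a in the image of ι₂: middle vertex
        rcases u with x | x
        · simp [ι₁, ι₂] at ha
        · have : a = Sum.inl x := by simpa [ι₁, ι₂] using ha.symm
          exact Or.inr ⟨x, hu⟩
    · exact Or.inr ⟨mm, hmm⟩

lemma bot_reaches (d₁ : CDiag r k l) (d₂ : CDiag r l m) (j : Fin m)
    (y : Fin k ⊕ (Fin l ⊕ Fin m))
    (h : (bigRel d₁ d₂).r (Sum.inr (Sum.inr j)) y) :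
    (∃ u, y = ι₂ (k := k) u ∧ d₂.rel.r (Sum.inr j) u) ∨
      ∃ mm : Fin l, d₂.rel.r (Sum.inr j) (Sum.inl mm) := by
  rw [bigRel_r_iff] at h
  have h' : Relation.ReflTransGen (fun a b => R1 (m := m) d₁ a b ∨ R2 (k := k) d₂ a b)
      (Sum.inr (Sum.inr j)) y := eqvGen_rtg (symm_R1R2 d₁ d₂) h
  clear h
  induction h' with
  | refl => exact Or.inl ⟨Sum.inr j, rfl, d₂.rel.refl _⟩
  | tail hyz hstep ih =>
    rcases ih with ⟨u, rfl, hu⟩ | ⟨mm, hmm⟩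
    · rcases hstep with ⟨a, b, hab, ha, rfl⟩ | ⟨a, b, hab, ha, rfl⟩
      · -- ι₂ u = ι₁ a : middle vertex
        rcases a with x | x
        · simp [ι₁, ι₂] at ha
        · have : u = Sum.inl x := by simpa [ι₁, ι₂] using ha
          subst this
          exact Or.inr ⟨x, hu⟩
      · have : u = a := Sum.inr_injective ha
        subst this
        exact Or.inl ⟨b, rfl, d₂.rel.trans hu hab⟩
    · exact Or.inr ⟨mm, hmm⟩

end Rank
section RankMono

variable {r k l m : ℕ}

lemma bigRel_of_rel₁ (d₁ : CDiag r k l) (d₂ : CDiag r l m) {u v : Fin k ⊕ Fin l}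
    (h : d₁.rel.r u v) : (bigRel d₁ d₂).r (ι₁ u) (ι₁ v) := by
  have hle : push (ι₁ (m := m)) d₁.rel ≤ bigRel d₁ d₂ := le_sup_left
  exact Setoid.le_def.mp hle (Relation.EqvGen.rel _ _ ⟨u, v, h, rfl, rfl⟩)

lemma bigRel_of_rel₂ (d₁ : CDiag r k l) (d₂ : CDiag r l m) {u v : Fin l ⊕ Fin m}
    (h : d₂.rel.r u v) : (bigRel d₁ d₂).r (ι₂ u) (ι₂ v) := by
  have hle : push (ι₂ (k := k)) d₂.rel ≤ bigRel d₁ d₂ := le_sup_right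
  exact Setoid.le_def.mp hle (Relation.EqvGen.rel _ _ ⟨u, v, h, rfl, rfl⟩)

lemma rn_comp_le_left (d₁ : CDiag r k l) (d₂ : CDiag r l m) :
    rn (comp d₁ d₂) ≤ rn d₁ := by
  classical
  have hprop : ∀ q : {q : Quotient (comp d₁ d₂).rel // Propagating (comp d₁ d₂) q},
      Propagating d₁ (Quotient.mk d₁.rel (Sum.inl q.2.1.choose)) := by
    rintro ⟨q, hq⟩
    refine ⟨⟨hq.1.choose, rfl⟩, ?_⟩
    have hrel : (comp d₁ d₂).rel.r (Sum.inl hq.1.choose) (Sum.inr hq.2.choose) :=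
      Quotient.exact (hq.1.choose_spec.trans hq.2.choose_spec.symm)
    have hbig : (bigRel d₁ d₂).r (Sum.inl hq.1.choose)
        (Sum.inr (Sum.inr hq.2.choose)) := hrel
    rcases top_reaches d₁ d₂ _ _ hbig with ⟨u, hy, _⟩ | ⟨mm, hmm⟩
    · exfalso
      rcases u with x | x <;> simp [ι₁] at hy
    · exact ⟨mm, Quotient.sound (d₁.rel.symm hmm)⟩
  refine Nat.card_le_card_of_injective
    (fun q => ⟨Quotient.mk d₁.rel (Sum.inl q.2.1.choose), hprop q⟩) ?_
  rintro ⟨q, hq⟩ ⟨q', hq'⟩ hfq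
  have : Quotient.mk d₁.rel (Sum.inl hq.1.choose) =
      Quotient.mk d₁.rel (Sum.inl hq'.1.choose) := congrArg Subtype.val hfq
  have h1 : d₁.rel.r (Sum.inl hq.1.choose) (Sum.inl hq'.1.choose) := Quotient.exact this
  have h2 : (comp d₁ d₂).rel.r (Sum.inl hq.1.choose) (Sum.inl hq'.1.choose) :=
    bigRel_of_rel₁ d₁ d₂ h1
  have := (Quotient.sound h2 : Quotient.mk (comp d₁ d₂).rel _ = _)
  exact Subtype.ext ((hq.1.choose_spec.symm.trans this).trans hq'.1.choose_spec)

lemma rn_comp_le_right (d₁ : CDiag r k l) (d₂ : CDiag r l m) :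
    rn (comp d₁ d₂) ≤ rn d₂ := by
  classical
  have hprop : ∀ q : {q : Quotient (comp d₁ d₂).rel // Propagating (comp d₁ d₂) q},
      Propagating d₂ (Quotient.mk d₂.rel (Sum.inr q.2.2.choose)) := by
    rintro ⟨q, hq⟩
    refine ⟨?_, ⟨hq.2.choose, rfl⟩⟩
    have hrel : (comp d₁ d₂).rel.r (Sum.inr hq.2.choose) (Sum.inl hq.1.choose) :=
      Quotient.exact (hq.2.choose_spec.trans hq.1.choose_spec.symm)
    have hbig : (bigRel d₁ d₂).r (Sum.inr (Sum.inr hq.2.choose))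
        (Sum.inl hq.1.choose) := hrel
    rcases bot_reaches d₁ d₂ _ _ hbig with ⟨u, hy, _⟩ | ⟨mm, hmm⟩
    · exfalso
      rcases u with x | x <;> simp [ι₂] at hy
    · exact ⟨mm, Quotient.sound (d₂.rel.symm hmm)⟩
  refine Nat.card_le_card_of_injective
    (fun q => ⟨Quotient.mk d₂.rel (Sum.inr q.2.2.choose), hprop q⟩) ?_
  rintro ⟨q, hq⟩ ⟨q', hq'⟩ hfq
  have : Quotient.mk d₂.rel (Sum.inr hq.2.choose) =
      Quotient.mk d₂.rel (Sum.inr hq'.2.choose) := congrArg Subtype.val hfq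
  have h1 : d₂.rel.r (Sum.inr hq.2.choose) (Sum.inr hq'.2.choose) := Quotient.exact this
  have h2 : (comp d₁ d₂).rel.r (Sum.inr hq.2.choose) (Sum.inr hq'.2.choose) :=
    bigRel_of_rel₂ d₁ d₂ h1
  have := (Quotient.sound h2 : Quotient.mk (comp d₁ d₂).rel _ = _)
  exact Subtype.ext ((hq.2.choose_spec.symm.trans this).trans hq'.2.choose_spec)

end RankMono
section Construction

attribute [local instance] Classical.propDecidable

variable {r k : ℕ}

/-- Propagating blocks. -/
abbrev PB (w : CDiag r k k) := {q : Quotient w.rel // Propagating w q}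

variable (d x : CDiag r k k) (φ : PB x ↪ PB d)

/-- Tag space used to present all relevant set partitions as kernels. -/
abbrev Tag : Type := PB x ⊕ (Quotient d.rel ⊕ Quotient x.rel)

noncomputable def dsel (P : Quotient d.rel) : PB x ⊕ Quotient d.rel :=
  if h : ∃ Q : PB x, (φ Q).1 = P then Sum.inl h.choose else Sum.inr P

noncomputable def xsel (B : Quotient x.rel) : PB x ⊕ Quotient x.rel :=
  if h : Propagating x B then Sum.inl ⟨B, h⟩ else Sum.inr B

noncomputable def dmap (v : Fin k ⊕ Fin k) : Tag d x :=
  Sum.map id Sum.inl (dsel d x φ (Quotient.mk d.rel v))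

noncomputable def xmap (v : Fin k ⊕ Fin k) : Tag d x :=
  Sum.map id Sum.inr (xsel x (Quotient.mk x.rel v))

lemma dsel_phi (Q : PB x) : dsel d x φ (φ Q).1 = Sum.inl Q := by
  have h : ∃ Q' : PB x, (φ Q').1 = (φ Q).1 := ⟨Q, rfl⟩
  unfold dsel
  rw [dif_pos h]
  congr 1
  exact φ.injective (Subtype.ext h.choose_spec)

lemma dsel_section (P : Quotient d.rel) :
    Sum.elim (fun Q : PB x => (φ Q).1) id (dsel d x φ P) = P := by
  unfold dsel
  split_ifs with h
  · exact h.choose_spec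
  · rfl

lemma xsel_section (B : Quotient x.rel) :
    Sum.elim (fun Q : PB x => Q.1) id (xsel x B) = B := by
  unfold xsel
  split_ifs with h <;> rfl

lemma dsel_inj : Function.Injective (dsel d x φ) :=
  Function.LeftInverse.injective (dsel_section d x φ)

lemma xsel_inj : Function.Injective (xsel x) :=
  Function.LeftInverse.injective (xsel_section x)

lemma dmap_eq_iff (v w : Fin k ⊕ Fin k) :
    dmap d x φ v = dmap d x φ w ↔ Quotient.mk d.rel v = Quotient.mk d.rel w := by
  constructor
  · intro h
    refine dsel_inj d x φ ?_
    have hi : Function.Injective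
        (Sum.map (@id (PB x)) (Sum.inl : Quotient d.rel → Quotient d.rel ⊕ Quotient x.rel)) :=
      Sum.map_injective.mpr ⟨fun a b h => h, fun a b h => Sum.inl_injective h⟩
    exact hi h
  · intro h; simp only [dmap, h]

lemma xmap_eq_iff (v w : Fin k ⊕ Fin k) :
    xmap d x v = xmap d x w ↔ Quotient.mk x.rel v = Quotient.mk x.rel w := by
  constructor
  · intro h
    refine xsel_inj x ?_
    have hi : Function.Injective
        (Sum.map (@id (PB x)) (Sum.inr : Quotient x.rel → Quotient d.rel ⊕ Quotient x.rel)) :=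
      Sum.map_injective.mpr ⟨fun a b h => h, fun a b h => Sum.inr_injective h⟩
    exact hi h
  · intro h; simp only [xmap, h]

lemma dmap_eq_inl_iff (v : Fin k ⊕ Fin k) (Q : PB x) :
    dmap d x φ v = Sum.inl Q ↔ Quotient.mk d.rel v = (φ Q).1 := by
  constructor
  · intro h
    unfold dmap at h
    rcases hs : dsel d x φ (Quotient.mk d.rel v) with Q' | P <;> rw [hs] at h <;>
      simp only [Sum.map_inl, Sum.map_inr, id_eq] at h
    · cases h
      have := dsel_section d x φ (Quotient.mk d.rel v)
      rw [hs] at this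
      exact this.symm
    · exact absurd h (by simp)
  · intro h
    unfold dmap
    rw [h, dsel_phi]
    rfl

lemma xmap_eq_inl_iff (v : Fin k ⊕ Fin k) (Q : PB x) :
    xmap d x v = Sum.inl Q ↔ Quotient.mk x.rel v = Q.1 := by
  constructor
  · intro h
    unfold xmap at h
    rcases hs : xsel x (Quotient.mk x.rel v) with Q' | B <;> rw [hs] at h <;>
      simp only [Sum.map_inl, Sum.map_inr, id_eq] at h
    · cases h
      have := xsel_section x (Quotient.mk x.rel v)
      rw [hs] at this
      exact this.symm
    · exact absurd h (by simp)
  · intro h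
    have hprop : Propagating x (Quotient.mk x.rel v) := h ▸ Q.2
    unfold xmap xsel
    rw [dif_pos hprop]
    simp only [Sum.map_inl, id_eq]
    exact congrArg Sum.inl (Subtype.ext h)

lemma xmap_eq_dmap (v w : Fin k ⊕ Fin k) (h : xmap d x v = dmap d x φ w) :
    ∃ Q : PB x, Quotient.mk x.rel v = Q.1 ∧ Quotient.mk d.rel w = (φ Q).1 := by
  unfold xmap dmap at h
  rcases hx : xsel x (Quotient.mk x.rel v) with Q | B <;> rw [hx] at h <;>
    rcases hd : dsel d x φ (Quotient.mk d.rel w) with Q' | P <;> rw [hd] at h <;>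
      simp only [Sum.map_inl, Sum.map_inr, id_eq] at h
  · cases h
    refine ⟨Q, ?_, ?_⟩
    · have := xsel_section x (Quotient.mk x.rel v)
      rw [hx] at this
      exact this.symm
    · have := dsel_section d x φ (Quotient.mk d.rel w)
      rw [hd] at this
      exact this.symm
  · exact absurd h (by simp)
  · exact absurd h (by simp)
  · exact absurd (Sum.inr_injective h) (by simp)

end Construction
section Construction2

attribute [local instance] Classical.propDecidable

variable {r k : ℕ} (d x : CDiag r k k) (φ : PB x ↪ PB d)

noncomputable def fb : Fin k ⊕ Fin k → Tag d x := fun v =>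
  match v with
  | Sum.inl j => dmap d x φ (Sum.inr j)
  | Sum.inr j => xmap d x (Sum.inr j)

noncomputable def ga : Fin k ⊕ Fin k → Tag d x := fun v =>
  match v with
  | Sum.inl i => xmap d x (Sum.inl i)
  | Sum.inr i => dmap d x φ (Sum.inl i)

noncomputable def tagColA : Tag d x → Cr r := fun t =>
  match t with
  | Sum.inl Q => x.col Q.1 * (d.col (φ Q).1)⁻¹
  | Sum.inr (Sum.inl _) => 1
  | Sum.inr (Sum.inr B) => x.col B

noncomputable def tagColB : Tag d x → Cr r := fun t =>
  match t with
  | Sum.inl _ => 1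
  | Sum.inr (Sum.inl _) => 1
  | Sum.inr (Sum.inr B) => x.col B

noncomputable def bD : CDiag r k k :=
  ⟨Setoid.ker (fb d x φ), fun q => tagColB d x (fb d x φ q.out)⟩

noncomputable def aD : CDiag r k k :=
  ⟨Setoid.ker (ga d x φ), fun q => tagColA d x φ (ga d x φ q.out)⟩

lemma bD_rel_iff (u v : Fin k ⊕ Fin k) :
    (bD d x φ).rel.r u v ↔ fb d x φ u = fb d x φ v := Iff.rfl

lemma aD_rel_iff (u v : Fin k ⊕ Fin k) :
    (aD d x φ).rel.r u v ↔ ga d x φ u = ga d x φ v := Iff.rfl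

lemma bD_col_mk (v : Fin k ⊕ Fin k) :
    (bD d x φ).col (Quotient.mk (bD d x φ).rel v) = tagColB d x (fb d x φ v) := by
  have h : fb d x φ ((Quotient.mk (bD d x φ).rel v).out) = fb d x φ v :=
    Quotient.mk_out (s := (bD d x φ).rel) v
  exact congrArg (tagColB d x) h

lemma aD_col_mk (v : Fin k ⊕ Fin k) :
    (aD d x φ).col (Quotient.mk (aD d x φ).rel v) = tagColA d x φ (ga d x φ v) := by
  have h : ga d x φ ((Quotient.mk (aD d x φ).rel v).out) = ga d x φ v :=
    Quotient.mk_out (s := (aD d x φ).rel) v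
  exact congrArg (tagColA d x φ) h

noncomputable def Fb : Fin k ⊕ (Fin k ⊕ Fin k) → Tag d x := fun v =>
  match v with
  | Sum.inl i => dmap d x φ (Sum.inl i)
  | Sum.inr (Sum.inl j) => dmap d x φ (Sum.inr j)
  | Sum.inr (Sum.inr j) => xmap d x (Sum.inr j)

noncomputable def fy : Fin k ⊕ Fin k → Tag d x := fun v =>
  match v with
  | Sum.inl i => dmap d x φ (Sum.inl i)
  | Sum.inr j => xmap d x (Sum.inr j)

noncomputable def Ga : Fin k ⊕ (Fin k ⊕ Fin k) → Tag d x := fun v =>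
  match v with
  | Sum.inl i => xmap d x (Sum.inl i)
  | Sum.inr (Sum.inl i) => dmap d x φ (Sum.inl i)
  | Sum.inr (Sum.inr j) => xmap d x (Sum.inr j)

lemma Fb_i1 (u : Fin k ⊕ Fin k) : Fb d x φ (ι₁ u) = dmap d x φ u := by cases u <;> rfl
lemma Fb_i2 (u : Fin k ⊕ Fin k) : Fb d x φ (ι₂ u) = fb d x φ u := by cases u <;> rfl
lemma Fb_io (u : Fin k ⊕ Fin k) : Fb d x φ (ιo u) = fy d x φ u := by cases u <;> rfl
lemma Ga_i1 (u : Fin k ⊕ Fin k) : Ga d x φ (ι₁ u) = ga d x φ u := by cases u <;> rfl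
lemma Ga_i2 (u : Fin k ⊕ Fin k) : Ga d x φ (ι₂ u) = fy d x φ u := by cases u <;> rfl
lemma Ga_io (u : Fin k ⊕ Fin k) : Ga d x φ (ιo u) = xmap d x u := by cases u <;> rfl

lemma hF₁ : ∀ u v, d.rel.r u v → Fb d x φ (ι₁ u) = Fb d x φ (ι₁ v) := by
  intro u v h
  rw [Fb_i1, Fb_i1]
  exact (dmap_eq_iff d x φ u v).mpr (Quotient.sound h)

lemma hF₂ : ∀ u v, (bD d x φ).rel.r u v → Fb d x φ (ι₂ u) = Fb d x φ (ι₂ v) := by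
  intro u v h
  rw [Fb_i2, Fb_i2]
  exact h

/-- Bridge: a `d`-vertex lying in the block `φ Q` is `bigRel`-connected to any
bottom `x`-vertex of the block `Q`. -/
lemma bridgeF (w : Fin k ⊕ Fin k) (Q : PB x)
    (hw : Quotient.mk d.rel w = (φ Q).1) (j : Fin k)
    (hj : Quotient.mk x.rel (Sum.inr j) = Q.1) :
    (bigRel d (bD d x φ)).r (ι₁ w) (Sum.inr (Sum.inr j)) := by
  obtain ⟨-, j₀, hj₀⟩ := (φ Q).2
  have h1 : d.rel.r w (Sum.inr j₀) := Quotient.exact (hw.trans hj₀.symm)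
  have step1 : (bigRel d (bD d x φ)).r (ι₁ w) (Sum.inr (Sum.inl j₀)) :=
    bigRel_of_rel₁ d (bD d x φ) h1
  have hfb : fb d x φ (Sum.inl j₀) = fb d x φ (Sum.inr j) := by
    show dmap d x φ (Sum.inr j₀) = xmap d x (Sum.inr j)
    rw [(dmap_eq_inl_iff d x φ (Sum.inr j₀) Q).mpr hj₀,
      (xmap_eq_inl_iff d x (Sum.inr j) Q).mpr hj]
  have step2 : (bigRel d (bD d x φ)).r (Sum.inr (Sum.inl j₀)) (Sum.inr (Sum.inr j)) :=
    bigRel_of_rel₂ d (bD d x φ) (u := Sum.inl j₀) (v := Sum.inr j) hfb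
  exact (bigRel d (bD d x φ)).trans step1 step2

lemma hF₃ : ∀ p q, Fb d x φ p = Fb d x φ q → (bigRel d (bD d x φ)).r p q := by
  have htop : ∀ (w w' : Fin k ⊕ Fin k), dmap d x φ w = dmap d x φ w' →
      (bigRel d (bD d x φ)).r (ι₁ w) (ι₁ w') := fun w w' h =>
    bigRel_of_rel₁ d (bD d x φ) (Quotient.exact ((dmap_eq_iff d x φ w w').mp h))
  rintro (i | (j | j)) (i' | (j' | j')) h
  · exact htop (Sum.inl i) (Sum.inl i') h
  · exact htop (Sum.inl i) (Sum.inr j') h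
  · obtain ⟨Q, h1, h2⟩ := xmap_eq_dmap d x φ (Sum.inr j') (Sum.inl i) h.symm
    exact bridgeF d x φ (Sum.inl i) Q h2 j' h1
  · exact htop (Sum.inr j) (Sum.inl i') h
  · exact htop (Sum.inr j) (Sum.inr j') h
  · exact bigRel_of_rel₂ d (bD d x φ) (u := Sum.inl j) (v := Sum.inr j')
      (show fb d x φ (Sum.inl j) = fb d x φ (Sum.inr j') from h)
  · obtain ⟨Q, h1, h2⟩ := xmap_eq_dmap d x φ (Sum.inr j) (Sum.inl i') h
    exact (bigRel d (bD d x φ)).symm (bridgeF d x φ (Sum.inl i') Q h2 j h1)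
  · exact (bigRel d (bD d x φ)).symm (bigRel_of_rel₂ d (bD d x φ)
      (u := Sum.inl j') (v := Sum.inr j)
      (show fb d x φ (Sum.inl j') = fb d x φ (Sum.inr j) from h.symm))
  · exact bigRel_of_rel₂ d (bD d x φ) (u := Sum.inr j) (v := Sum.inr j')
      (show fb d x φ (Sum.inr j) = fb d x φ (Sum.inr j') from h)

noncomputable def yD : CDiag r k k := comp d (bD d x φ)

lemma y_rel_iff (u v : Fin k ⊕ Fin k) :
    (yD d x φ).rel.r u v ↔ fy d x φ u = fy d x φ v := by
  rw [show (yD d x φ).rel = (comp d (bD d x φ)).rel from rfl]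
  rw [comp_rel_iff d (bD d x φ) (Fb d x φ) (hF₁ d x φ) (hF₂ d x φ) (hF₃ d x φ) u v,
    Fb_io, Fb_io]

lemma hG₁ : ∀ u v, (aD d x φ).rel.r u v → Ga d x φ (ι₁ u) = Ga d x φ (ι₁ v) := by
  intro u v h
  rw [Ga_i1, Ga_i1]
  exact h

lemma hG₂ : ∀ u v, (yD d x φ).rel.r u v → Ga d x φ (ι₂ u) = Ga d x φ (ι₂ v) := by
  intro u v h
  rw [Ga_i2, Ga_i2]
  exact (y_rel_iff d x φ u v).mp h

lemma bridgeG (v : Fin k ⊕ Fin k) (Q : PB x) (hv : ga d x φ v = Sum.inl Q)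
    (j : Fin k) (hj : xmap d x (Sum.inr j) = Sum.inl Q) :
    (bigRel (aD d x φ) (yD d x φ)).r (ι₁ v) (Sum.inr (Sum.inr j)) := by
  obtain ⟨⟨i₀, hi₀⟩, -⟩ := (φ Q).2
  have hdm : dmap d x φ (Sum.inl i₀) = Sum.inl Q :=
    (dmap_eq_inl_iff d x φ (Sum.inl i₀) Q).mpr hi₀
  have step1 : (bigRel (aD d x φ) (yD d x φ)).r (ι₁ v) (Sum.inr (Sum.inl i₀)) :=
    bigRel_of_rel₁ (aD d x φ) (yD d x φ) (u := v) (v := Sum.inr i₀)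
      (show ga d x φ v = ga d x φ (Sum.inr i₀) by
        rw [hv]; exact hdm.symm)
  have step2 : (bigRel (aD d x φ) (yD d x φ)).r (Sum.inr (Sum.inl i₀))
      (Sum.inr (Sum.inr j)) :=
    bigRel_of_rel₂ (aD d x φ) (yD d x φ) (u := Sum.inl i₀) (v := Sum.inr j)
      ((y_rel_iff d x φ (Sum.inl i₀) (Sum.inr j)).mpr (by
        show dmap d x φ (Sum.inl i₀) = xmap d x (Sum.inr j)
        rw [hdm, hj]))
  exact (bigRel (aD d x φ) (yD d x φ)).trans step1 step2

lemma hG₃ : ∀ p q, Ga d x φ p = Ga d x φ q → (bigRel (aD d x φ) (yD d x φ)).r p q := by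
  have hrel1 : ∀ (w w' : Fin k ⊕ Fin k), ga d x φ w = ga d x φ w' →
      (bigRel (aD d x φ) (yD d x φ)).r (ι₁ w) (ι₁ w') := fun w w' h =>
    bigRel_of_rel₁ (aD d x φ) (yD d x φ) h
  have hrel2 : ∀ (w w' : Fin k ⊕ Fin k), fy d x φ w = fy d x φ w' →
      (bigRel (aD d x φ) (yD d x φ)).r (ι₂ w) (ι₂ w') := fun w w' h =>
    bigRel_of_rel₂ (aD d x φ) (yD d x φ) ((y_rel_iff d x φ w w').mpr h)
  have hbr : ∀ (i j : Fin k), xmap d x (Sum.inl i) = xmap d x (Sum.inr j) →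
      (bigRel (aD d x φ) (yD d x φ)).r (Sum.inl i) (Sum.inr (Sum.inr j)) := by
    intro i j h
    have hmk : Quotient.mk x.rel (Sum.inl i) = Quotient.mk x.rel (Sum.inr j) :=
      (xmap_eq_iff d x _ _).mp h
    have hprop : Propagating x (Quotient.mk x.rel (Sum.inl i)) :=
      ⟨⟨i, rfl⟩, ⟨j, hmk.symm⟩⟩
    set Q : PB x := ⟨Quotient.mk x.rel (Sum.inl i), hprop⟩ with hQ
    have hv : ga d x φ (Sum.inl i) = Sum.inl Q :=
      (xmap_eq_inl_iff d x (Sum.inl i) Q).mpr rfl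
    have hj : xmap d x (Sum.inr j) = Sum.inl Q :=
      (xmap_eq_inl_iff d x (Sum.inr j) Q).mpr hmk.symm
    exact bridgeG d x φ (Sum.inl i) Q hv j hj
  rintro (i | (j | j)) (i' | (j' | j')) h
  · exact hrel1 (Sum.inl i) (Sum.inl i') h
  · exact hrel1 (Sum.inl i) (Sum.inr j') h
  · exact hbr i j' h
  · exact hrel1 (Sum.inr j) (Sum.inl i') h
  · exact hrel1 (Sum.inr j) (Sum.inr j') h
  · exact hrel2 (Sum.inl j) (Sum.inr j')
      (show fy d x φ (Sum.inl j) = fy d x φ (Sum.inr j') from h)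
  · exact (bigRel (aD d x φ) (yD d x φ)).symm (hbr i' j h.symm)
  · exact (bigRel (aD d x φ) (yD d x φ)).symm (hrel2 (Sum.inl j') (Sum.inr j)
      (show fy d x φ (Sum.inl j') = fy d x φ (Sum.inr j) from h.symm))
  · exact hrel2 (Sum.inr j) (Sum.inr j')
      (show fy d x φ (Sum.inr j) = fy d x φ (Sum.inr j') from h)

noncomputable def zD : CDiag r k k := comp (aD d x φ) (yD d x φ)

lemma z_rel_iff (u v : Fin k ⊕ Fin k) :
    (zD d x φ).rel.r u v ↔ Quotient.mk x.rel u = Quotient.mk x.rel v := by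
  rw [show (zD d x φ).rel = (comp (aD d x φ) (yD d x φ)).rel from rfl]
  rw [comp_rel_iff (aD d x φ) (yD d x φ) (Ga d x φ)
    (hG₁ d x φ) (hG₂ d x φ) (hG₃ d x φ) u v, Ga_io, Ga_io, xmap_eq_iff]

end Construction2
section FinprodPoint

variable {α β M : Type*} [CommMonoid M]

lemma finprod_eval_point (g : α → β) (col : α → M) (hinj : Function.Injective g)
    (a₀ : α) (c : β) (hc : g a₀ = c) : (∏ᶠ (a) (_ : g a = c), col a) = col a₀ :=
  finprod_cond_unique col _ a₀ (fun a => ⟨fun h => hinj (h.trans hc.symm), fun h => h ▸ hc⟩)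

lemma finprod_eval_empty (g : α → β) (col : α → M) (c : β) (hc : ∀ a, g a ≠ c) :
    (∏ᶠ (a) (_ : g a = c), col a) = 1 :=
  finprod_cond_empty col _ (fun a => hc a)

end FinprodPoint

section Construction3

attribute [local instance] Classical.propDecidable

variable {r k : ℕ} (d x : CDiag r k k) (φ : PB x ↪ PB d)

lemma dmap_ne_inrinr (w : Fin k ⊕ Fin k) (B : Quotient x.rel) :
    dmap d x φ w ≠ Sum.inr (Sum.inr B) := by
  unfold dmap
  rcases dsel d x φ (Quotient.mk d.rel w) with Q | P <;> simp

lemma xmap_nonprop (v : Fin k ⊕ Fin k) (h : ¬ Propagating x (Quotient.mk x.rel v)) :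
    xmap d x v = Sum.inr (Sum.inr (Quotient.mk x.rel v)) := by
  unfold xmap xsel
  rw [dif_neg h]
  rfl

lemma gaQ_mk (v : Fin k ⊕ Fin k) :
    ga d x φ (leadRep (aD d x φ) (Quotient.mk (aD d x φ).rel v)) = ga d x φ v :=
  Quotient.exact (leadRep_mk (aD d x φ) (Quotient.mk (aD d x φ).rel v))

lemma gaQ_inj : Function.Injective (fun A => ga d x φ (leadRep (aD d x φ) A)) := by
  intro A A' h
  have : Quotient.mk (aD d x φ).rel (leadRep (aD d x φ) A) =
      Quotient.mk (aD d x φ).rel (leadRep (aD d x φ) A') := Quotient.sound h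
  rwa [leadRep_mk, leadRep_mk] at this

lemma fbQ_mk (v : Fin k ⊕ Fin k) :
    fb d x φ (leadRep (bD d x φ) (Quotient.mk (bD d x φ).rel v)) = fb d x φ v :=
  Quotient.exact (leadRep_mk (bD d x φ) (Quotient.mk (bD d x φ).rel v))

lemma fbQ_inj : Function.Injective (fun C => fb d x φ (leadRep (bD d x φ) C)) := by
  intro C C' h
  have : Quotient.mk (bD d x φ).rel (leadRep (bD d x φ) C) =
      Quotient.mk (bD d x φ).rel (leadRep (bD d x φ) C') := Quotient.sound h
  rwa [leadRep_mk, leadRep_mk] at this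

lemma fyQ_mk (v : Fin k ⊕ Fin k) :
    fy d x φ (leadRep (yD d x φ) (Quotient.mk (yD d x φ).rel v)) = fy d x φ v :=
  (y_rel_iff d x φ _ _).mp (Quotient.exact (leadRep_mk (yD d x φ) _))

lemma fyQ_inj : Function.Injective (fun C => fy d x φ (leadRep (yD d x φ) C)) := by
  intro C C' h
  have : Quotient.mk (yD d x φ).rel (leadRep (yD d x φ) C) =
      Quotient.mk (yD d x φ).rel (leadRep (yD d x φ) C') :=
    Quotient.sound ((y_rel_iff d x φ _ _).mpr h)
  rwa [leadRep_mk, leadRep_mk] at this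

lemma dmapQ_mk (v : Fin k ⊕ Fin k) :
    dmap d x φ (leadRep d (Quotient.mk d.rel v)) = dmap d x φ v :=
  (dmap_eq_iff d x φ _ _).mpr (leadRep_mk d (Quotient.mk d.rel v))

lemma dmapQ_inj : Function.Injective (fun B => dmap d x φ (leadRep d B)) := by
  intro B B' h
  have : Quotient.mk d.rel (leadRep d B) = Quotient.mk d.rel (leadRep d B') :=
    (dmap_eq_iff d x φ _ _).mp h
  rwa [leadRep_mk, leadRep_mk] at this

lemma y_col (u : Fin k ⊕ Fin k) :
    (yD d x φ).col (Quotient.mk (yD d x φ).rel u) =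
      (∏ᶠ (B : Quotient d.rel) (_ : dmap d x φ (leadRep d B) = fy d x φ u), d.col B) *
      (∏ᶠ (C : Quotient (bD d x φ).rel)
        (_ : fb d x φ (leadRep (bD d x φ) C) = fy d x φ u), (bD d x φ).col C) := by
  have h := comp_col_eq d (bD d x φ) (Fb d x φ) (hF₁ d x φ) (hF₂ d x φ) (hF₃ d x φ) u
  simp only [Fb_i1, Fb_i2, Fb_io] at h; exact h

lemma z_col (u : Fin k ⊕ Fin k) :
    (zD d x φ).col (Quotient.mk (zD d x φ).rel u) =
      (∏ᶠ (A : Quotient (aD d x φ).rel)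
        (_ : ga d x φ (leadRep (aD d x φ) A) = xmap d x u), (aD d x φ).col A) *
      (∏ᶠ (C : Quotient (yD d x φ).rel)
        (_ : fy d x φ (leadRep (yD d x φ) C) = xmap d x u), (yD d x φ).col C) := by
  have h := comp_col_eq (aD d x φ) (yD d x φ) (Ga d x φ)
    (hG₁ d x φ) (hG₂ d x φ) (hG₃ d x φ) u
  simp only [Ga_i1, Ga_i2, Ga_io] at h; exact h

lemma z_col_eq (u : Fin k ⊕ Fin k) :
    (zD d x φ).col (Quotient.mk (zD d x φ).rel u) = x.col (Quotient.mk x.rel u) := by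
  rw [z_col]
  by_cases hprop : Propagating x (Quotient.mk x.rel u)
  · set Q : PB x := ⟨Quotient.mk x.rel u, hprop⟩ with hQ
    have hxu : xmap d x u = Sum.inl Q := (xmap_eq_inl_iff d x u Q).mpr rfl
    obtain ⟨i₂, hi₂⟩ := hprop.1
    obtain ⟨j₂, hj₂⟩ := hprop.2
    obtain ⟨⟨i₁, hi₁⟩, -⟩ := (φ Q).2
    have hi₂' : Quotient.mk x.rel (Sum.inl i₂) = Q.1 := hi₂
    have hj₂' : Quotient.mk x.rel (Sum.inr j₂) = Q.1 := hj₂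
    have hga : ga d x φ (leadRep (aD d x φ)
        (Quotient.mk (aD d x φ).rel (Sum.inl i₂))) = xmap d x u := by
      rw [gaQ_mk]
      show xmap d x (Sum.inl i₂) = xmap d x u
      rw [hxu]
      exact (xmap_eq_inl_iff d x _ Q).mpr hi₂'
    rw [finprod_eval_point _ _ (gaQ_inj d x φ) _ _ hga]
    have hfy : fy d x φ (leadRep (yD d x φ)
        (Quotient.mk (yD d x φ).rel (Sum.inl i₁))) = xmap d x u := by
      rw [fyQ_mk]
      show dmap d x φ (Sum.inl i₁) = xmap d x u
      rw [hxu]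
      exact (dmap_eq_inl_iff d x φ _ Q).mpr hi₁
    rw [finprod_eval_point _ _ (fyQ_inj d x φ) _ _ hfy]
    have hacol : (aD d x φ).col (Quotient.mk (aD d x φ).rel (Sum.inl i₂)) =
        x.col Q.1 * (d.col (φ Q).1)⁻¹ := by
      rw [aD_col_mk]
      have hh : ga d x φ (Sum.inl i₂) = Sum.inl Q :=
        (xmap_eq_inl_iff d x _ Q).mpr hi₂'
      rw [hh]
      rfl
    rw [hacol, y_col]
    have hfyi : fy d x φ (Sum.inl i₁) = Sum.inl Q :=
      (dmap_eq_inl_iff d x φ (Sum.inl i₁) Q).mpr hi₁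
    have hdm : dmap d x φ (leadRep d (φ Q).1) = fy d x φ (Sum.inl i₁) := by
      rw [hfyi, ← hi₁, dmapQ_mk]
      exact (dmap_eq_inl_iff d x φ _ Q).mpr hi₁
    rw [finprod_eval_point _ _ (dmapQ_inj d x φ) _ _ hdm]
    have hfb : fb d x φ (leadRep (bD d x φ)
        (Quotient.mk (bD d x φ).rel (Sum.inr j₂))) = fy d x φ (Sum.inl i₁) := by
      rw [fbQ_mk, hfyi]
      show xmap d x (Sum.inr j₂) = Sum.inl Q
      exact (xmap_eq_inl_iff d x _ Q).mpr hj₂'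
    rw [finprod_eval_point _ _ (fbQ_inj d x φ) _ _ hfb]
    have hbcol : (bD d x φ).col (Quotient.mk (bD d x φ).rel (Sum.inr j₂)) = 1 := by
      rw [bD_col_mk]
      have hh : fb d x φ (Sum.inr j₂) = Sum.inl Q := by
        show xmap d x (Sum.inr j₂) = Sum.inl Q
        exact (xmap_eq_inl_iff d x _ Q).mpr hj₂'
      rw [hh]
      rfl
    rw [hbcol, mul_one, mul_assoc, inv_mul_cancel, mul_one]
  · rcases u with i | j
    · -- non-propagating, top vertex
      have hxu : xmap d x (Sum.inl i) =
          Sum.inr (Sum.inr (Quotient.mk x.rel (Sum.inl i))) :=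
        xmap_nonprop d x _ hprop
      have hga : ga d x φ (leadRep (aD d x φ)
          (Quotient.mk (aD d x φ).rel (Sum.inl i))) = xmap d x (Sum.inl i) := by
        rw [gaQ_mk]
        rfl
      rw [finprod_eval_point _ _ (gaQ_inj d x φ) _ _ hga]
      have hempty : ∀ C, fy d x φ (leadRep (yD d x φ) C) ≠ xmap d x (Sum.inl i) := by
        intro C
        rcases hv : leadRep (yD d x φ) C with i' | j'
        · show dmap d x φ (Sum.inl i') ≠ xmap d x (Sum.inl i)
          rw [hxu]
          exact dmap_ne_inrinr d x φ _ _
        · show xmap d x (Sum.inr j') ≠ xmap d x (Sum.inl i)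
          intro hcon
          exact hprop ⟨⟨i, rfl⟩, ⟨j', (xmap_eq_iff d x _ _).mp hcon⟩⟩
      rw [finprod_eval_empty _ _ _ hempty, mul_one]
      rw [aD_col_mk]
      show tagColA d x φ (xmap d x (Sum.inl i)) = _
      rw [hxu]
      rfl
    · -- non-propagating, bottom vertex
      have hxu : xmap d x (Sum.inr j) =
          Sum.inr (Sum.inr (Quotient.mk x.rel (Sum.inr j))) :=
        xmap_nonprop d x _ hprop
      have hempty : ∀ A, ga d x φ (leadRep (aD d x φ) A) ≠ xmap d x (Sum.inr j) := by
        intro A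
        rcases hv : leadRep (aD d x φ) A with i' | i'
        · show xmap d x (Sum.inl i') ≠ xmap d x (Sum.inr j)
          intro hcon
          exact hprop ⟨⟨i', ((xmap_eq_iff d x _ _).mp hcon)⟩, ⟨j, rfl⟩⟩
        · show dmap d x φ (Sum.inl i') ≠ xmap d x (Sum.inr j)
          rw [hxu]
          exact dmap_ne_inrinr d x φ _ _
      rw [finprod_eval_empty _ _ _ hempty, one_mul]
      have hfy : fy d x φ (leadRep (yD d x φ)
          (Quotient.mk (yD d x φ).rel (Sum.inr j))) = xmap d x (Sum.inr j) := by
        rw [fyQ_mk]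
        rfl
      rw [finprod_eval_point _ _ (fyQ_inj d x φ) _ _ hfy, y_col]
      have hempty2 : ∀ B, dmap d x φ (leadRep d B) ≠ fy d x φ (Sum.inr j) := by
        intro B
        show _ ≠ xmap d x (Sum.inr j)
        rw [hxu]
        exact dmap_ne_inrinr d x φ _ _
      rw [finprod_eval_empty _ _ _ hempty2, one_mul]
      have hfb : fb d x φ (leadRep (bD d x φ)
          (Quotient.mk (bD d x φ).rel (Sum.inr j))) = fy d x φ (Sum.inr j) := by
        rw [fbQ_mk]
        rfl
      rw [finprod_eval_point _ _ (fbQ_inj d x φ) _ _ hfb]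
      rw [bD_col_mk]
      show tagColB d x (xmap d x (Sum.inr j)) = _
      rw [hxu]
      rfl

end Construction3
lemma CDiag_ext {r k l : ℕ} {d e : CDiag r k l} (h : d.rel = e.rel)
    (h2 : ∀ u, d.col (Quotient.mk d.rel u) = e.col (Quotient.mk e.rel u)) : d = e := by
  cases d with
  | mk dr dc =>
    cases e with
    | mk er ec =>
      dsimp at h h2
      subst h
      have : dc = ec := by
        funext q
        induction q using Quotient.ind with
        | _ u => exact h2 u
      rw [this]

lemma z_eq (d x : CDiag r k k) (φ : PB x ↪ PB d) : zD d x φ = x := by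
  refine CDiag_ext ?_ (z_col_eq d x φ)
  apply Setoid.ext
  intro a b
  constructor
  · intro h
    exact Quotient.exact ((z_rel_iff d x φ a b).mp h)
  · intro h
    exact (z_rel_iff d x φ a b).mpr (Quotient.sound h)

lemma exists_factor (d x : CDiag r k k) (hle : rn x ≤ rn d) :
    ∃ a b, comp a (comp d b) = x := by
  classical
  have hcard : Nat.card (PB x) ≤ Nat.card (PB d) := hle
  obtain ⟨φ⟩ : Nonempty (PB x ↪ PB d) := by
    haveI := Fintype.ofFinite (PB x)
    haveI := Fintype.ofFinite (PB d)
    apply Function.Embedding.nonempty_of_card_le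
    rwa [← Nat.card_eq_fintype_card, ← Nat.card_eq_fintype_card]
  refine ⟨aD d x φ, bD d x φ, ?_⟩
  show zD d x φ = x
  exact z_eq d x φ

end CPar

open CPar in
/-- Green's J-relation on the colored partition monoid `CPar_k`: two colored
partition diagrams generate the same two-sided ideal if and only if they have
the same rank (number of propagating parts). -/
theorem coloredPartitionMonoid_J_iff_rank (r k : ℕ) (d d' : CDiag r k k) :
    {x : CDiag r k k | ∃ a b, comp a (comp d b) = x}
      = {x : CDiag r k k | ∃ a b, comp a (comp d' b) = x}
    ↔ rn d = rn d' := by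
  constructor
  · intro hset
    have h1 : d ∈ {x : CDiag r k k | ∃ a b, comp a (comp d b) = x} :=
      exists_factor d d le_rfl
    have h2 : d' ∈ {x : CDiag r k k | ∃ a b, comp a (comp d' b) = x} :=
      exists_factor d' d' le_rfl
    rw [hset] at h1
    rw [← hset] at h2
    obtain ⟨a, b, hab⟩ := h1
    obtain ⟨a', b', hab'⟩ := h2
    have hd : rn d ≤ rn d' := by
      rw [← hab]
      exact le_trans (rn_comp_le_right a (comp d' b)) (rn_comp_le_left d' b)
    have hd' : rn d' ≤ rn d := by
      rw [← hab']
      exact le_trans (rn_comp_le_right a' (comp d b')) (rn_comp_le_left d b')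
    exact le_antisymm hd hd'
  · intro hrn
    ext x
    simp only [Set.mem_setOf_eq]
    constructor
    · rintro ⟨a, b, rfl⟩
      exact exists_factor d' _
        (le_trans (le_trans (rn_comp_le_right a (comp d b)) (rn_comp_le_left d b)) hrn.le)
    · rintro ⟨a, b, rfl⟩
      exact exists_factor d _
        (le_trans (le_trans (rn_comp_le_right a (comp d' b)) (rn_comp_le_left d' b)) hrn.ge)
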